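/- For all real numbers a and x and every natural number n, dⁿ/dxⁿ e^{a x²} = H_n^{(2)}(2ax, a) · e^{a x²}, where H_n^{(2)} is the two-variable Hermite–Kampé de Fériet polynomial. -/

import Mathlib

open Finset

/-- The two-variable Hermite–Kampé de Fériet polynomials. -/
noncomputable def hermiteKdF2 (n : ℕ) (x y : ℝ) : ℝ :=
  (n.factorial : ℝ) * ∑ k ∈ Finset.range (n / 2 + 1),
    x ^ (n - 2 * k) * y ^ k / ((n - 2 * k).factorial * k.factorial)

lemma fne (n : ℕ) : ((n.factorial : ℝ)) ≠ 0 := Nat.cast_ne_zero.mpr n.factorial_ne_zero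

lemma hk_zero (x y : ℝ) : hermiteKdF2 0 x y = 1 := by simp [hermiteKdF2]

lemma hk_one (x y : ℝ) : hermiteKdF2 1 x y = x := by simp [hermiteKdF2]

lemma hk_rec (n : ℕ) (x y : ℝ) :
    hermiteKdF2 (n+2) x y =
      x * hermiteKdF2 (n+1) x y + 2*y*((n:ℝ)+1) * hermiteKdF2 n x y := by
  rcases Nat.even_or_odd n with ⟨m, rfl⟩ | ⟨m, rfl⟩
  · simp only [hermiteKdF2]
    rw [show (m+m+2)/2+1 = m+2 by omega, show (m+m+1)/2+1 = m+1 by omega,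
        show (m+m)/2+1 = m+1 by omega]
    simp only [Finset.mul_sum]
    conv_lhs => rw [Finset.sum_range_succ' _ (m+1), Finset.sum_range_succ _ m]
    conv_rhs => rw [Finset.sum_range_succ' _ m, Finset.sum_range_succ _ m]
    have hs : ∑ k ∈ Finset.range m,
          (((m + m + 2).factorial : ℝ)) *
            (x ^ (m + m + 2 - 2 * (k + 1)) * y ^ (k + 1) /
              (((m + m + 2 - 2 * (k + 1)).factorial : ℝ) * ((k + 1).factorial : ℝ))) =
        ∑ k ∈ Finset.range m,
          (x * (((m + m + 1).factorial : ℝ) *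
              (x ^ (m + m + 1 - 2 * (k + 1)) * y ^ (k + 1) /
                (((m + m + 1 - 2 * (k + 1)).factorial : ℝ) * ((k + 1).factorial : ℝ)))) +
           2 * y * (((m + m : ℕ) : ℝ) + 1) * (((m + m).factorial : ℝ) *
              (x ^ (m + m - 2 * k) * y ^ k / (((m + m - 2 * k).factorial : ℝ) * (k.factorial : ℝ))))) := by
      refine Finset.sum_congr rfl fun k hk => ?_
      simp only [Finset.mem_range] at hk
      obtain ⟨i, rfl⟩ : ∃ i, m = k + 1 + i := ⟨m - (k+1), by omega⟩
      rw [show k+1+i + (k+1+i) + 2 - 2*(k+1) = 2*i+2 by omega,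
          show k+1+i + (k+1+i) + 1 - 2*(k+1) = 2*i+1 by omega,
          show k+1+i + (k+1+i) - 2*k = 2*i+2 by omega,
          show k+1+i + (k+1+i) + 2 = 2*k+2*i+4 by omega,
          show k+1+i + (k+1+i) + 1 = 2*k+2*i+3 by omega,
          show k+1+i + (k+1+i) = 2*k+2*i+2 by omega]
      have e1 : (((2*k+2*i+4).factorial : ℕ) : ℝ)
          = (2*k+2*i+4) * ((2*k+2*i+3) * ((2*k+2*i+2).factorial : ℝ)) := by
        rw [show 2*k+2*i+4 = (2*k+2*i+3)+1 by omega, Nat.factorial_succ,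
            show 2*k+2*i+3 = (2*k+2*i+2)+1 by omega, Nat.factorial_succ]
        push_cast; ring
      have e2 : (((2*k+2*i+3).factorial : ℕ) : ℝ) = (2*k+2*i+3) * ((2*k+2*i+2).factorial : ℝ) := by
        rw [show 2*k+2*i+3 = (2*k+2*i+2)+1 by omega, Nat.factorial_succ]; push_cast; ring
      have e3 : (((2*i+2).factorial : ℕ) : ℝ) = (2*i+2) * ((2*i+1).factorial : ℝ) := by
        rw [show 2*i+2 = (2*i+1)+1 by omega, Nat.factorial_succ]; push_cast; ring
      have e4 : (((k+1).factorial : ℕ) : ℝ) = (k+1) * (k.factorial : ℝ) := by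
        rw [Nat.factorial_succ]; push_cast; ring
      rw [e1, e2, e3, e4]
      have n1 := fne (2*k+2*i+2)
      have n2 := fne (2*i+1)
      have n3 := fne k
      field_simp
      push_cast
      ring
    rw [hs, Finset.sum_add_distrib]
    have hf0 : (((m + m + 2).factorial : ℝ)) *
          (x ^ (m + m + 2 - 2 * 0) * y ^ 0 / (((m + m + 2 - 2 * 0).factorial : ℝ) * ((Nat.factorial 0 : ℕ) : ℝ))) =
        x * (((m + m + 1).factorial : ℝ) *
          (x ^ (m + m + 1 - 2 * 0) * y ^ 0 / (((m + m + 1 - 2 * 0).factorial : ℝ) * ((Nat.factorial 0 : ℕ) : ℝ)))) := by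
      simp only [Nat.mul_zero, Nat.sub_zero, pow_zero, Nat.factorial_zero, Nat.cast_one]
      have h1 := fne (m+m+2); have h2 := fne (m+m+1)
      field_simp
      ring
    have hfm : (((m + m + 2).factorial : ℝ)) *
          (x ^ (m + m + 2 - 2 * (m + 1)) * y ^ (m + 1) /
            (((m + m + 2 - 2 * (m + 1)).factorial : ℝ) * ((m + 1).factorial : ℝ))) =
        2 * y * (((m + m : ℕ) : ℝ) + 1) * (((m + m).factorial : ℝ) *
          (x ^ (m + m - 2 * m) * y ^ m / (((m + m - 2 * m).factorial : ℝ) * (m.factorial : ℝ)))) := by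
      rw [show m+m+2-2*(m+1) = 0 by omega, show m+m-2*m = 0 by omega]
      simp only [Nat.factorial_zero, pow_zero, Nat.cast_one]
      rw [show ((m+m+2).factorial : ℝ) = (m+m+2) * ((m+m+1) * ((m+m).factorial : ℝ)) by
            rw [show m+m+2 = (m+m+1)+1 by omega, Nat.factorial_succ,
                show m+m+1 = (m+m)+1 by omega, Nat.factorial_succ]; push_cast; ring,
          show (((m+1).factorial : ℕ) : ℝ) = (m+1) * (m.factorial : ℝ) by
            rw [Nat.factorial_succ]; push_cast; ring]
      have n1 := fne (m+m)
      have n2 := fne m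
      field_simp
      push_cast
      ring
    linarith [hf0, hfm]
  · simp only [hermiteKdF2]
    rw [show (2*m+1+2)/2+1 = m+2 by omega, show (2*m+1+1)/2+1 = m+2 by omega,
        show (2*m+1)/2+1 = m+1 by omega]
    simp only [Finset.mul_sum]
    conv_lhs => rw [Finset.sum_range_succ' _ (m+1)]
    conv_rhs => rw [Finset.sum_range_succ' _ (m+1)]
    have hs : ∑ k ∈ Finset.range (m+1),
          (((2*m+1 + 2).factorial : ℝ)) *
            (x ^ (2*m+1 + 2 - 2 * (k + 1)) * y ^ (k + 1) /
              (((2*m+1 + 2 - 2 * (k + 1)).factorial : ℝ) * ((k + 1).factorial : ℝ))) =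
        ∑ k ∈ Finset.range (m+1),
          (x * (((2*m+1 + 1).factorial : ℝ) *
              (x ^ (2*m+1 + 1 - 2 * (k + 1)) * y ^ (k + 1) /
                (((2*m+1 + 1 - 2 * (k + 1)).factorial : ℝ) * ((k + 1).factorial : ℝ)))) +
           2 * y * (((2*m+1 : ℕ) : ℝ) + 1) * (((2*m+1).factorial : ℝ) *
              (x ^ (2*m+1 - 2 * k) * y ^ k / (((2*m+1 - 2 * k).factorial : ℝ) * (k.factorial : ℝ))))) := by
      refine Finset.sum_congr rfl fun k hk => ?_
      simp only [Finset.mem_range] at hk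
      obtain ⟨i, rfl⟩ : ∃ i, m = k + i := ⟨m - k, by omega⟩
      rw [show 2*(k+i)+1 + 2 - 2*(k+1) = 2*i+1 by omega,
          show 2*(k+i)+1 + 1 - 2*(k+1) = 2*i by omega,
          show 2*(k+i)+1 - 2*k = 2*i+1 by omega,
          show 2*(k+i)+1 + 2 = 2*k+2*i+3 by omega,
          show 2*(k+i)+1 + 1 = 2*k+2*i+2 by omega,
          show 2*(k+i)+1 = 2*k+2*i+1 by omega]
      have e1 : (((2*k+2*i+3).factorial : ℕ) : ℝ)
          = (2*k+2*i+3) * ((2*k+2*i+2) * ((2*k+2*i+1).factorial : ℝ)) := by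
        rw [show 2*k+2*i+3 = (2*k+2*i+2)+1 by omega, Nat.factorial_succ,
            show 2*k+2*i+2 = (2*k+2*i+1)+1 by omega, Nat.factorial_succ]
        push_cast; ring
      have e2 : (((2*k+2*i+2).factorial : ℕ) : ℝ) = (2*k+2*i+2) * ((2*k+2*i+1).factorial : ℝ) := by
        rw [show 2*k+2*i+2 = (2*k+2*i+1)+1 by omega, Nat.factorial_succ]; push_cast; ring
      have e3 : (((2*i+1).factorial : ℕ) : ℝ) = (2*i+1) * ((2*i).factorial : ℝ) := by
        rw [show 2*i+1 = (2*i)+1 by omega, Nat.factorial_succ]; push_cast; ring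
      have e4 : (((k+1).factorial : ℕ) : ℝ) = (k+1) * (k.factorial : ℝ) := by
        rw [Nat.factorial_succ]; push_cast; ring
      rw [e1, e2, e3, e4]
      have n1 := fne (2*k+2*i+1)
      have n2 := fne (2*i)
      have n3 := fne k
      field_simp
      push_cast
      ring
    rw [hs, Finset.sum_add_distrib]
    have hf0 : (((2*m+1 + 2).factorial : ℝ)) *
          (x ^ (2*m+1 + 2 - 2 * 0) * y ^ 0 /
            (((2*m+1 + 2 - 2 * 0).factorial : ℝ) * ((Nat.factorial 0 : ℕ) : ℝ))) =
        x * (((2*m+1 + 1).factorial : ℝ) *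
          (x ^ (2*m+1 + 1 - 2 * 0) * y ^ 0 /
            (((2*m+1 + 1 - 2 * 0).factorial : ℝ) * ((Nat.factorial 0 : ℕ) : ℝ)))) := by
      simp only [Nat.mul_zero, Nat.sub_zero, pow_zero, Nat.factorial_zero, Nat.cast_one]
      have h1 := fne (2*m+1+2); have h2 := fne (2*m+1+1)
      field_simp
      ring
    linarith [hf0]

lemma hk_succ (n : ℕ) (x y : ℝ) :
    hermiteKdF2 (n+1) x y = x * hermiteKdF2 n x y + 2*y*(n:ℝ) * hermiteKdF2 (n-1) x y := by
  cases n with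
  | zero => simp [hk_zero, hk_one]
  | succ k => rw [hk_rec]; push_cast; ring_nf

lemma hk_hasDerivAt (a : ℝ) (n : ℕ) (x : ℝ) :
    HasDerivAt (fun t => hermiteKdF2 n (2*a*t) a)
      (2*a*(n:ℝ) * hermiteKdF2 (n-1) (2*a*x) a) x := by
  induction n using Nat.twoStepInduction generalizing x with
  | zero =>
    simp only [hk_zero, Nat.cast_zero]
    simpa using hasDerivAt_const x (1:ℝ)
  | one =>
    have h : HasDerivAt (fun t : ℝ => 2*a*t) (2*a) x := by
      simpa using (hasDerivAt_id x).const_mul (2*a)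
    have h2 : HasDerivAt (fun t => hermiteKdF2 1 (2*a*t) a) (2*a) x := by
      simpa only [hk_one] using h
    simpa [hk_zero] using h2
  | more n ih1 ih2 =>
    have hrw : (fun t => hermiteKdF2 (n+2) (2*a*t) a)
        = fun t => (2*a*t) * hermiteKdF2 (n+1) (2*a*t) a
            + 2*a*((n:ℝ)+1) * hermiteKdF2 n (2*a*t) a := by
      funext t; rw [hk_rec]
    rw [hrw]
    have hlin : HasDerivAt (fun t : ℝ => 2*a*t) (2*a) x := by
      simpa using (hasDerivAt_id x).const_mul (2*a)
    have hd := (hlin.mul (ih2 x)).add ((ih1 x).const_mul (2*a*((n:ℝ)+1)))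
    refine hd.congr_deriv ?_
    rw [show n+2-1 = n+1 by omega, Nat.add_sub_cancel, hk_succ n (2*a*x) a]
    push_cast
    ring

theorem iteratedDeriv_exp_sq (a x : ℝ) (n : ℕ) :
    iteratedDeriv n (fun t => Real.exp (a * t ^ 2)) x =
      hermiteKdF2 n (2 * a * x) a * Real.exp (a * x ^ 2) := by
  induction n generalizing x with
  | zero => simp [hk_zero]
  | succ n ih =>
    rw [iteratedDeriv_succ]
    have hfun : iteratedDeriv n (fun t => Real.exp (a * t ^ 2))
        = fun t => hermiteKdF2 n (2 * a * t) a * Real.exp (a * t ^ 2) := funext ih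
    rw [hfun]
    have hexp : HasDerivAt (fun t : ℝ => Real.exp (a * t ^ 2))
        (Real.exp (a * x ^ 2) * (a * (2 * x ^ 1))) x :=
      ((hasDerivAt_pow 2 x).const_mul a).exp
    have hd := (hk_hasDerivAt a n x).mul hexp
    rw [show deriv (fun t => hermiteKdF2 n (2 * a * t) a * Real.exp (a * t ^ 2)) x = _ from hd.deriv]
    rw [hk_succ n (2*a*x) a]
    ring
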